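/- For every natural number n and every natural number k with 2 ≤ k ≤ (1/2)·log₂ n, any red/blue coloring of the edges of the complete graph on n vertices contains at least 2^((−3k² + 5k − 4)/2) · C(n, k) monochromatic cliques of size k. -/

import Mathlib

open Finset

namespace Stmt11

variable {n : ℕ}

noncomputable def pickSub (s : Finset (Fin n)) (m : ℕ) : Finset (Fin n) :=
  if h : m ≤ s.card then (Finset.exists_subset_card_eq h).choose else s

lemma pickSub_subset (s : Finset (Fin n)) (m : ℕ) : pickSub s m ⊆ s := by
  unfold pickSub
  split
  · exact (Finset.exists_subset_card_eq ‹_›).choose_spec.1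
  · exact Finset.Subset.refl s

lemma pickSub_card {s : Finset (Fin n)} {m : ℕ} (h : m ≤ s.card) : (pickSub s m).card = m := by
  unfold pickSub
  rw [dif_pos h]
  exact (Finset.exists_subset_card_eq h).choose_spec.2

variable (c : Fin n → Fin n → Bool)

def bestb (A : Finset (Fin n)) (v : Fin n) : Bool :=
  decide ((A.erase v).card ≤ 2 * ((A.erase v).filter (fun w => c v w = true)).card)

lemma majority_card {A : Finset (Fin n)} {v : Fin n} (hv : v ∈ A) :
    A.card / 2 ≤ ((A.erase v).filter (fun w => c v w = bestb c A v)).card := by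
  have hce : (A.erase v).card = A.card - 1 := Finset.card_erase_of_mem hv
  have hsplit : ((A.erase v).filter (fun w => c v w = true)).card
      + ((A.erase v).filter (fun w => ¬ (c v w = true))).card = (A.erase v).card :=
    Finset.card_filter_add_card_filter_not _
  by_cases h : (A.erase v).card ≤ 2 * ((A.erase v).filter (fun w => c v w = true)).card
  · have hb : bestb c A v = true := by unfold bestb; exact decide_eq_true h
    rw [hb]
    omega
  · have hb : bestb c A v = false := by
      unfold bestb; exact decide_eq_false h
    rw [hb]
    have heq : (A.erase v).filter (fun w => c v w = false)
        = (A.erase v).filter (fun w => ¬ (c v w = true)) := by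
      apply Finset.filter_congr
      intro w _
      simp
    rw [heq]
    omega

noncomputable def shrink (A : Finset (Fin n)) (v : Fin n) : Finset (Fin n) :=
  pickSub ((A.erase v).filter (fun w => c v w = bestb c A v)) (A.card / 2)

lemma shrink_subset_erase (A : Finset (Fin n)) (v : Fin n) : shrink c A v ⊆ A.erase v :=
  (pickSub_subset _ _).trans (Finset.filter_subset _ _)

lemma shrink_subset (A : Finset (Fin n)) (v : Fin n) : shrink c A v ⊆ A :=
  (shrink_subset_erase c A v).trans (Finset.erase_subset _ _)

lemma shrink_color {A : Finset (Fin n)} {v w : Fin n} (hw : w ∈ shrink c A v) :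
    c v w = bestb c A v ∧ w ≠ v := by
  have h1 := (pickSub_subset _ _) hw
  have h2 := Finset.mem_filter.mp h1
  exact ⟨h2.2, Finset.ne_of_mem_erase h2.1⟩

lemma shrink_card {A : Finset (Fin n)} {v : Fin n} (hv : v ∈ A) :
    (shrink c A v).card = A.card / 2 :=
  pickSub_card (majority_card c hv)


variable (B : Finset (Fin n))

noncomputable def Aof : List (Fin n) → Finset (Fin n)
  | [] => B
  | v :: l => shrink c (Aof l) v

lemma Aof_subset_B : ∀ l, Aof c B l ⊆ B
  | [] => Finset.Subset.refl B
  | v :: l => (shrink_subset c _ v).trans (Aof_subset_B l)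

lemma Aof_append_subset : ∀ (y l : List (Fin n)), Aof c B (y ++ l) ⊆ Aof c B l
  | [], _ => Finset.Subset.refl _
  | a :: y, l => (shrink_subset c _ a).trans (Aof_append_subset y l)

noncomputable def Seq : ℕ → Finset (List (Fin n))
  | 0 => {[]}
  | j + 1 => (Seq j).biUnion (fun l => (Aof c B l).image (fun v => v :: l))

lemma mem_seq_succ {j : ℕ} {l : List (Fin n)} :
    l ∈ Seq c B (j + 1) ↔ ∃ l' ∈ Seq c B j, ∃ v ∈ Aof c B l', l = v :: l' := by
  constructor
  · intro h
    rw [Seq, Finset.mem_biUnion] at h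
    obtain ⟨l', hl', hmem⟩ := h
    obtain ⟨v, hv, hvl⟩ := Finset.mem_image.mp hmem
    exact ⟨l', hl', v, hv, hvl.symm⟩
  · rintro ⟨l', hl', v, hv, rfl⟩
    rw [Seq, Finset.mem_biUnion]
    exact ⟨l', hl', Finset.mem_image.mpr ⟨v, hv, rfl⟩⟩

lemma seq_length : ∀ (j : ℕ), ∀ l ∈ Seq c B j, l.length = j := by
  intro j
  induction j with
  | zero => intro l hl; rw [Seq, Finset.mem_singleton] at hl; simp [hl]
  | succ j ih =>
    intro l hl
    obtain ⟨l', hl', v, _, rfl⟩ := (mem_seq_succ c B).mp hl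
    simp [ih l' hl']

lemma seq_suffix {j : ℕ} {l : List (Fin n)} (hl : l ∈ Seq c B j) :
    ∀ l', l' <:+ l → l' ∈ Seq c B l'.length := by
  induction j generalizing l with
  | zero =>
    rw [Seq, Finset.mem_singleton] at hl
    subst hl
    intro l' h
    rw [List.suffix_nil] at h
    subst h
    simp only [List.length_nil, Seq]
    exact Finset.mem_singleton_self _
  | succ j ih =>
    obtain ⟨lt, hlt, v, hv, rfl⟩ := (mem_seq_succ c B).mp hl
    intro l' h
    rcases List.suffix_cons_iff.mp h with h1 | h2
    · subst h1
      have : (v :: lt).length = j + 1 := by simp [seq_length c B j lt hlt]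
      rw [this]
      exact (mem_seq_succ c B).mpr ⟨lt, hlt, v, hv, rfl⟩
    · exact ih hlt l' h2

lemma seq_edge {j : ℕ} {l : List (Fin n)} (hl : l ∈ Seq c B j) {l₂ l₁ : List (Fin n)}
    {v : Fin n} (hdec : l = l₂ ++ v :: l₁) :
    v ∈ Aof c B l₁ ∧ ∀ w ∈ l₂, c v w = bestb c (Aof c B l₁) v ∧ w ≠ v := by
  constructor
  · have hsuf : (v :: l₁) ∈ Seq c B (v :: l₁).length :=
      seq_suffix c B hl _ ⟨l₂, hdec.symm⟩
    have : (v :: l₁).length = l₁.length + 1 := by simp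
    rw [this] at hsuf
    obtain ⟨l', hl', v', hv', heq⟩ := (mem_seq_succ c B).mp hsuf
    obtain ⟨rfl, rfl⟩ : v = v' ∧ l₁ = l' := by
      constructor <;> injection heq
    exact hv'
  · intro w hw
    obtain ⟨x, y, rfl⟩ := List.append_of_mem hw
    have hsuf : (w :: (y ++ v :: l₁)) ∈ Seq c B (w :: (y ++ v :: l₁)).length := by
      apply seq_suffix c B hl
      refine ⟨x, ?_⟩
      rw [hdec]
      simp
    rw [List.length_cons] at hsuf
    obtain ⟨l', hl', v', hv', heq⟩ := (mem_seq_succ c B).mp hsuf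
    obtain ⟨rfl, rfl⟩ : w = v' ∧ (y ++ v :: l₁) = l' := by
      constructor <;> injection heq
    have hmem : w ∈ Aof c B (v :: l₁) := Aof_append_subset c B y (v :: l₁) hv'
    rw [Aof] at hmem
    exact shrink_color c hmem

lemma seq_nodup {j : ℕ} {l : List (Fin n)} (hl : l ∈ Seq c B j) : l.Nodup := by
  induction j generalizing l with
  | zero => rw [Seq, Finset.mem_singleton] at hl; subst hl; exact List.nodup_nil
  | succ j ih =>
    obtain ⟨lt, hlt, v, hv, rfl⟩ := (mem_seq_succ c B).mp hl
    rw [List.nodup_cons]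
    refine ⟨?_, ih hlt⟩
    intro hvl
    obtain ⟨x, y, rfl⟩ := List.append_of_mem hvl
    have := (seq_edge c B hl (l₂ := v :: x) (l₁ := y) (v := v) (by simp)).2 v (by simp)
    exact this.2 rfl

lemma seq_mem_B {j : ℕ} {l : List (Fin n)} (hl : l ∈ Seq c B j) : ∀ v ∈ l, v ∈ B := by
  induction j generalizing l with
  | zero => rw [Seq, Finset.mem_singleton] at hl; subst hl; simp
  | succ j ih =>
    obtain ⟨lt, hlt, v, hv, rfl⟩ := (mem_seq_succ c B).mp hl
    intro u hu
    rcases List.mem_cons.mp hu with rfl | h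
    · exact Aof_subset_B c B lt hv
    · exact ih hlt u h

lemma Aof_card {T : ℕ} (hB : B.card = 2 ^ T) :
    ∀ j, j ≤ T → ∀ l ∈ Seq c B j, (Aof c B l).card = 2 ^ (T - j) := by
  intro j
  induction j with
  | zero =>
    intro _ l hl
    rw [Seq, Finset.mem_singleton] at hl
    subst hl
    simpa [Aof] using hB
  | succ j ih =>
    intro hj l hl
    obtain ⟨lt, hlt, v, hv, rfl⟩ := (mem_seq_succ c B).mp hl
    have hcard : (Aof c B lt).card = 2 ^ (T - j) := ih (by omega) lt hlt
    rw [Aof, shrink_card c hv, hcard]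
    have h1 : T - j = (T - (j+1)) + 1 := by omega
    rw [h1, pow_succ]
    omega

lemma seq_card {T : ℕ} (hB : B.card = 2 ^ T) :
    ∀ j, j ≤ T → (Seq c B j).card = ∏ i ∈ Finset.range j, 2 ^ (T - i) := by
  intro j
  induction j with
  | zero => intro _; simp [Seq]
  | succ j ih =>
    intro hj
    rw [Seq, Finset.card_biUnion]
    · have : ∀ l ∈ Seq c B j, ((Aof c B l).image (fun v => v :: l)).card = 2 ^ (T - j) := by
        intro l hl
        rw [Finset.card_image_of_injective _ (fun a b h => by injection h)]
        exact Aof_card c B hB j (by omega) l hl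
      rw [Finset.sum_congr rfl this, Finset.sum_const, ih (by omega),
        Finset.prod_range_succ, smul_eq_mul, mul_comm]
    · intro x hx y hy hxy
      rw [Function.onFun, Finset.disjoint_left]
      intro a ha hb
      obtain ⟨v, _, rfl⟩ := Finset.mem_image.mp ha
      obtain ⟨w, _, heq⟩ := Finset.mem_image.mp hb
      apply hxy
      injection heq.symm


lemma nodup_decomp_unique {α : Type*} :
    ∀ (x₁ : List α) {x₂ y₁ y₂ : List α} {a : α}, (x₁ ++ a :: y₁).Nodup →
      x₁ ++ a :: y₁ = x₂ ++ a :: y₂ → y₁ = y₂ := by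
  intro x₁
  induction x₁ with
  | nil =>
    intro x₂ y₁ y₂ a hnd heq
    cases x₂ with
    | nil => simpa using heq
    | cons b x₂ =>
      simp only [List.nil_append, List.cons_append, List.cons.injEq] at heq
      obtain ⟨rfl, h2⟩ := heq
      rw [List.nil_append, List.nodup_cons] at hnd
      exfalso
      exact hnd.1 (h2 ▸ (by simp : a ∈ x₂ ++ a :: y₂))
  | cons b x₁ ih =>
    intro x₂ y₁ y₂ a hnd heq
    cases x₂ with
    | nil =>
      simp only [List.nil_append, List.cons_append, List.cons.injEq] at heq
      obtain ⟨rfl, h2⟩ := heq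
      rw [List.cons_append, List.nodup_cons] at hnd
      exfalso
      exact hnd.1 (h2.symm ▸ (by simp : b ∈ x₁ ++ b :: y₁))
    | cons d x₂ =>
      simp only [List.cons_append, List.cons.injEq] at heq
      rw [List.cons_append, List.nodup_cons] at hnd
      exact ih hnd.2 heq.2

noncomputable def labs : List (Fin n) → List Bool
  | [] => []
  | v :: l => bestb c (Aof c B l) v :: labs l

lemma labs_length : ∀ l : List (Fin n), (labs c B l).length = l.length
  | [] => rfl
  | _ :: l => by rw [labs, List.length_cons, List.length_cons, labs_length l]

lemma zip_decomp : ∀ (lt : List (Fin n)) (p : Fin n × Bool), p ∈ lt.zip (labs c B lt) →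
    ∃ x y, lt = x ++ p.1 :: y ∧ p.2 = bestb c (Aof c B y) p.1 := by
  intro lt
  induction lt with
  | nil => intro p hp; simp [labs] at hp
  | cons u lt ih =>
    intro p hp
    rw [labs, List.zip_cons_cons, List.mem_cons] at hp
    rcases hp with rfl | hp
    · exact ⟨[], lt, by simp⟩
    · obtain ⟨x, y, hxy, hb⟩ := ih p hp
      exact ⟨u :: x, y, by rw [hxy]; simp, hb⟩

variable (k : ℕ)

noncomputable def selColor (lt : List (Fin n)) : Bool :=
  decide (k - 1 ≤ (labs c B lt).countP (fun b => b))

noncomputable def selL (lt : List (Fin n)) : List (Fin n) :=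
  (((lt.zip (labs c B lt)).filter
    (fun p => p.2 == selColor c B k lt)).map Prod.fst).take (k - 1)

noncomputable def Phi : List (Fin n) → Finset (Fin n)
  | [] => ∅
  | v :: lt => insert v (selL c B k lt).toFinset

lemma count_split : ∀ l : List Bool, l.countP (fun b => b) + l.countP (fun b => !b) = l.length := by
  intro l
  induction l with
  | nil => rfl
  | cons b l ih =>
    cases b <;> simp [List.countP_cons] <;> omega

lemma selL_length {lt : List (Fin n)} (hlen : lt.length = 2 * k - 3) (hk : 2 ≤ k) :
    (selL c B k lt).length = k - 1 := by
  have hz : ((lt.zip (labs c B lt)).filter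
      (fun p => p.2 == selColor c B k lt)).length
      = (labs c B lt).countP (fun b => b == selColor c B k lt) := by
    rw [← List.countP_eq_length_filter]
    have hmap : (lt.zip (labs c B lt)).map Prod.snd = labs c B lt :=
      List.map_snd_zip (by rw [labs_length])
    calc (lt.zip (labs c B lt)).countP (fun p => p.2 == selColor c B k lt)
        = ((lt.zip (labs c B lt)).map Prod.snd).countP (fun b => b == selColor c B k lt) := by
          rw [List.countP_map]; rfl
      _ = _ := by rw [hmap]
  have hlab : (labs c B lt).length = 2 * k - 3 := by rw [labs_length, hlen]
  have hcount : k - 1 ≤ (labs c B lt).countP (fun b => b == selColor c B k lt) := by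
    by_cases h : k - 1 ≤ (labs c B lt).countP (fun b => b)
    · have : selColor c B k lt = true := by unfold selColor; exact decide_eq_true h
      rw [this]
      simpa using h
    · have hsel : selColor c B k lt = false := by unfold selColor; exact decide_eq_false h
      rw [hsel]
      have := count_split (labs c B lt)
      have h2 : (labs c B lt).countP (fun b => b == false) = (labs c B lt).countP (fun b => !b) := by
        apply List.countP_congr
        intro b _
        cases b <;> simp
      omega
  unfold selL
  rw [List.length_take, List.length_map, hz]
  omega

lemma selL_sublist (lt : List (Fin n)) : (selL c B k lt).Sublist lt := by
  unfold selL
  refine (List.take_sublist _ _).trans ?_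
  have h1 : ((lt.zip (labs c B lt)).filter
      (fun p => p.2 == selColor c B k lt)).Sublist (lt.zip (labs c B lt)) :=
    List.filter_sublist
  have h2 := h1.map Prod.fst
  rwa [List.map_fst_zip (by rw [labs_length])] at h2

lemma selL_decomp {lt : List (Fin n)} {u : Fin n} (hu : u ∈ selL c B k lt) :
    ∃ x y, lt = x ++ u :: y ∧ bestb c (Aof c B y) u = selColor c B k lt := by
  have h1 : u ∈ ((lt.zip (labs c B lt)).filter
      (fun p => p.2 == selColor c B k lt)).map Prod.fst := List.mem_of_mem_take hu
  obtain ⟨p, hp, hpu⟩ := List.mem_map.mp h1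
  rw [List.mem_filter] at hp
  obtain ⟨x, y, hxy, hb⟩ := zip_decomp c B lt p hp.1
  refine ⟨x, y, by rw [hxy, hpu], ?_⟩
  rw [hpu] at hb
  rw [← hb]
  exact beq_iff_eq.mp hp.2


lemma selL_mem_lt {lt : List (Fin n)} {u : Fin n} (hu : u ∈ selL c B k lt) : u ∈ lt :=
  (selL_sublist c B k lt).subset hu

lemma phi_aux1 {j : ℕ} {v₀ : Fin n} {lt : List (Fin n)} (hl : (v₀ :: lt) ∈ Seq c B j)
    {u : Fin n} (hu : u ∈ selL c B k lt) :
    c u v₀ = selColor c B k lt ∧ u ≠ v₀ := by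
  obtain ⟨x, y, hxy, hb⟩ := selL_decomp c B k hu
  have hdec : v₀ :: lt = (v₀ :: x) ++ u :: y := by rw [hxy]; simp
  have := (seq_edge c B hl hdec).2 v₀ (by simp)
  rw [hb] at this
  exact ⟨this.1, fun h => this.2 h.symm⟩

lemma phi_aux2 {j : ℕ} {v₀ : Fin n} {lt : List (Fin n)} (hl : (v₀ :: lt) ∈ Seq c B j)
    (hsym : ∀ i j, c i j = c j i)
    {u w : Fin n} (hu : u ∈ selL c B k lt) (hw : w ∈ selL c B k lt) (hne : u ≠ w) :
    c u w = selColor c B k lt := by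
  have hnd : lt.Nodup := (List.nodup_cons.mp (seq_nodup c B hl)).2
  obtain ⟨xu, yu, hxyu, hbu⟩ := selL_decomp c B k hu
  obtain ⟨xw, yw, hxyw, hbw⟩ := selL_decomp c B k hw
  have hwlt : w ∈ lt := selL_mem_lt c B k hw
  rw [hxyu] at hwlt
  rcases List.mem_append.mp hwlt with hwxu | hwc
  · -- w later than u : edge from u
    have hdec : v₀ :: lt = (v₀ :: xu) ++ u :: yu := by rw [hxyu]; simp
    have := (seq_edge c B hl hdec).2 w (by simp [hwxu])
    rw [hbu] at this
    exact this.1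
  · rcases List.mem_cons.mp hwc with rfl | hwyu
    · exact absurd rfl hne
    · -- w ∈ yu; show u ∈ xw
      have hult : u ∈ lt := selL_mem_lt c B k hu
      rw [hxyw] at hult
      rcases List.mem_append.mp hult with huxw | huc
      · have hdec : v₀ :: lt = (v₀ :: xw) ++ w :: yw := by rw [hxyw]; simp
        have := (seq_edge c B hl hdec).2 u (by simp [huxw])
        rw [hbw] at this
        rw [hsym]
        exact this.1
      · rcases List.mem_cons.mp huc with rfl | huyw
        · exact absurd rfl hne
        · -- contradiction via nodup
          exfalso
          obtain ⟨a, b2, hab⟩ := List.append_of_mem hwyu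
          have heq2 : xw ++ w :: yw = (xu ++ u :: a) ++ w :: b2 := by
            rw [← hxyw, hxyu, hab]; simp
          have hnd' : (xw ++ w :: yw).Nodup := by rwa [← hxyw]
          have hyw : yw = b2 := nodup_decomp_unique xw hnd' heq2
          have huyu : u ∈ yu := by
            rw [hyw] at huyw
            rw [hab]
            simp [huyw]
          have : (u :: yu).Nodup := by
            have : (xu ++ u :: yu).Nodup := by rwa [← hxyu]
            exact this.of_append_right
          exact (List.nodup_cons.mp this).1 huyu

lemma phi_card {v₀ : Fin n} {lt : List (Fin n)} {j : ℕ} (hl : (v₀ :: lt) ∈ Seq c B j)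
    (hlen : lt.length = 2 * k - 3) (hk : 2 ≤ k) :
    (Phi c B k (v₀ :: lt)).card = k := by
  have hnd0 := seq_nodup c B hl
  rw [List.nodup_cons] at hnd0
  have hselnd : (selL c B k lt).Nodup := (selL_sublist c B k lt).nodup hnd0.2
  have hv0 : v₀ ∉ (selL c B k lt).toFinset := by
    rw [List.mem_toFinset]
    intro h
    exact hnd0.1 (selL_mem_lt c B k h)
  rw [Phi, Finset.card_insert_of_notMem hv0, List.card_toFinset, hselnd.dedup,
    selL_length c B k hlen hk]
  omega

lemma phi_subset_entries {v₀ : Fin n} {lt : List (Fin n)} :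
    Phi c B k (v₀ :: lt) ⊆ (v₀ :: lt).toFinset := by
  rw [Phi]
  intro x hx
  rcases Finset.mem_insert.mp hx with rfl | hx
  · simp
  · rw [List.mem_toFinset] at hx ⊢
    exact List.mem_cons_of_mem _ (selL_mem_lt c B k hx)

lemma phi_mono {v₀ : Fin n} {lt : List (Fin n)} {j : ℕ} (hl : (v₀ :: lt) ∈ Seq c B j)
    (hsym : ∀ i j, c i j = c j i) :
    ∀ u ∈ Phi c B k (v₀ :: lt), ∀ w ∈ Phi c B k (v₀ :: lt), u ≠ w →
      c u w = selColor c B k lt := by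
  intro u hu w hw hne
  rw [Phi] at hu hw
  rcases Finset.mem_insert.mp hu with hu0 | hu
  · rcases Finset.mem_insert.mp hw with hw0 | hw
    · exact absurd (hu0.trans hw0.symm) hne
    · rw [List.mem_toFinset] at hw
      rw [hu0, hsym]
      exact (phi_aux1 c B k hl hw).1
  · rcases Finset.mem_insert.mp hw with hw0 | hw
    · rw [List.mem_toFinset] at hu
      rw [hw0]
      exact (phi_aux1 c B k hl hu).1
    · rw [List.mem_toFinset] at hu hw
      exact phi_aux2 c B k hl hsym hu hw hne


noncomputable def Gfun (j r : ℕ) : ℕ :=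
  ∑ Q ∈ (Finset.range j).powersetCard r, ∏ i ∈ Finset.range j \ Q, 2 ^ (2 * k - i)

lemma Gfun_zero_zero : Gfun k 0 0 = 1 := by
  simp [Gfun]

lemma Gfun_succ_zero (j : ℕ) : Gfun k (j + 1) 0 = 2 ^ (2 * k - j) * Gfun k j 0 := by
  simp only [Gfun, Finset.powersetCard_zero, Finset.sum_singleton, Finset.sdiff_empty,
    Finset.prod_range_succ]
  ring

lemma Gfun_succ (j r : ℕ) :
    Gfun k (j + 1) (r + 1) = 2 ^ (2 * k - j) * Gfun k j (r + 1) + Gfun k j r := by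
  have hj : j ∉ Finset.range j := by simp
  simp only [Gfun, Finset.range_add_one]
  rw [Finset.powersetCard_succ_insert hj, Finset.sum_union]
  · congr 1
    · rw [Finset.mul_sum]
      apply Finset.sum_congr rfl
      intro Q hQ
      have hQsub : Q ⊆ Finset.range j := (Finset.mem_powersetCard.mp hQ).1
      have hjQ : j ∉ Q := fun h => hj (hQsub h)
      have hsd : insert j (Finset.range j) \ Q = insert j (Finset.range j \ Q) := by
        ext i
        simp only [Finset.mem_sdiff, Finset.mem_insert]
        constructor
        · rintro ⟨h1 | h1, h2⟩
          · exact Or.inl h1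
          · exact Or.inr ⟨h1, h2⟩
        · rintro (rfl | ⟨h1, h2⟩)
          · exact ⟨Or.inl rfl, hjQ⟩
          · exact ⟨Or.inr h1, h2⟩
      rw [hsd, Finset.prod_insert (by simp)]
    · rw [Finset.sum_image]
      · apply Finset.sum_congr rfl
        intro Q hQ
        have hQsub : Q ⊆ Finset.range j := (Finset.mem_powersetCard.mp hQ).1
        have hjQ : j ∉ Q := fun h => hj (hQsub h)
        congr 1
        ext i
        simp only [Finset.mem_sdiff, Finset.mem_insert, Finset.mem_range]
        constructor
        · rintro ⟨h1 | h1, h2⟩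
          · exfalso; exact h2 (Or.inl h1)
          · exact ⟨h1, fun hq => h2 (Or.inr hq)⟩
        · rintro ⟨h1, h2⟩
          refine ⟨Or.inr h1, ?_⟩
          rintro (rfl | hq)
          · omega
          · exact h2 hq
      · intro Q hQ Q' hQ' heq
        have hQsub : Q ⊆ Finset.range j := (Finset.mem_powersetCard.mp hQ).1
        have hQ'sub : Q' ⊆ Finset.range j := (Finset.mem_powersetCard.mp hQ').1
        have h1 : (insert j Q).erase j = Q := Finset.erase_insert (fun h => hj (hQsub h))
        have h2 : (insert j Q').erase j = Q' := Finset.erase_insert (fun h => hj (hQ'sub h))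
        rw [← h1, ← h2, heq]
  · rw [Finset.disjoint_left]
    intro Q hQ hQ2
    have hQsub : Q ⊆ Finset.range j := (Finset.mem_powersetCard.mp hQ).1
    obtain ⟨Q', _, rfl⟩ := Finset.mem_image.mp hQ2
    exact hj (hQsub (Finset.mem_insert_self j Q'))

lemma count_forced (hB : B.card = 2 ^ (2 * k)) :
    ∀ j, j ≤ 2 * k → ∀ S' : Finset (Fin n),
      ((Seq c B j).filter (fun l => S' ⊆ l.toFinset)).card ≤ Nat.factorial S'.card * Gfun k j S'.card := by
  intro j
  induction j with
  | zero =>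
    intro _ S'
    rcases eq_or_ne S' ∅ with rfl | hne
    · simp only [Finset.card_empty, Nat.factorial_zero, Gfun_zero_zero, mul_one]
      calc ((Seq c B 0).filter _).card ≤ (Seq c B 0).card := Finset.card_filter_le _ _
        _ = 1 := by rw [Seq]; simp
    · have : ((Seq c B 0).filter (fun l => S' ⊆ l.toFinset)).card = 0 := by
        rw [Finset.card_eq_zero, Finset.filter_eq_empty_iff]
        intro l hl
        rw [Seq, Finset.mem_singleton] at hl
        subst hl
        simp only [List.toFinset_nil]
        intro hsub
        exact hne (Finset.subset_empty.mp hsub)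
      rw [this]
      exact Nat.zero_le _
  | succ j ih =>
    intro hj S'
    have hsub : (Seq c B (j+1)).filter (fun l => S' ⊆ l.toFinset) ⊆
        (Seq c B j).biUnion (fun lt =>
          ((Aof c B lt).filter (fun v => S' ⊆ insert v lt.toFinset)).image (fun v => v :: lt)) := by
      intro l hl
      rw [Finset.mem_filter] at hl
      obtain ⟨lt, hlt, v, hv, rfl⟩ := (mem_seq_succ c B).mp hl.1
      rw [Finset.mem_biUnion]
      refine ⟨lt, hlt, Finset.mem_image.mpr ⟨v, ?_, rfl⟩⟩
      rw [Finset.mem_filter]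
      refine ⟨hv, ?_⟩
      have := hl.2
      rwa [List.toFinset_cons] at this
    calc ((Seq c B (j+1)).filter (fun l => S' ⊆ l.toFinset)).card
        ≤ _ := Finset.card_le_card hsub
      _ ≤ ∑ lt ∈ Seq c B j,
            (((Aof c B lt).filter (fun v => S' ⊆ insert v lt.toFinset)).image
              (fun v => v :: lt)).card := Finset.card_biUnion_le
      _ ≤ ∑ lt ∈ Seq c B j,
            ((Aof c B lt).filter (fun v => S' ⊆ insert v lt.toFinset)).card :=
        Finset.sum_le_sum (fun lt _ => Finset.card_image_le)
      _ ≤ Nat.factorial S'.card * Gfun k (j+1) S'.card := ?_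
    rcases Nat.eq_zero_or_pos S'.card with hr | hr
    · -- S' = ∅
      have hS' : S' = ∅ := Finset.card_eq_zero.mp hr
      subst hS'
      calc ∑ lt ∈ Seq c B j, ((Aof c B lt).filter (fun v => (∅:Finset (Fin n)) ⊆ insert v lt.toFinset)).card
          ≤ ∑ lt ∈ Seq c B j, 2 ^ (2 * k - j) := by
            apply Finset.sum_le_sum
            intro lt hlt
            calc _ ≤ (Aof c B lt).card := Finset.card_filter_le _ _
              _ = 2 ^ (2 * k - j) := Aof_card c B hB j (by omega) lt hlt
        _ = (Seq c B j).card * 2 ^ (2 * k - j) := by rw [Finset.sum_const, smul_eq_mul]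
        _ ≤ (((Seq c B j).filter (fun l => (∅:Finset (Fin n)) ⊆ l.toFinset)).card) * 2 ^ (2*k-j) := by
            apply Nat.mul_le_mul_right
            apply Finset.card_le_card
            intro l hl
            rw [Finset.mem_filter]
            exact ⟨hl, Finset.empty_subset _⟩
        _ ≤ (Nat.factorial (∅:Finset (Fin n)).card * Gfun k j (∅:Finset (Fin n)).card) * 2 ^ (2*k-j) :=
            Nat.mul_le_mul_right _ (ih (by omega) ∅)
        _ = Nat.factorial (∅:Finset (Fin n)).card * Gfun k (j+1) (∅:Finset (Fin n)).card := by
            simp only [Finset.card_empty, Nat.factorial_zero, one_mul, Gfun_succ_zero]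
            ring
    · obtain ⟨r, hrr⟩ : ∃ r, S'.card = r + 1 := ⟨S'.card - 1, by omega⟩
      have step1 : ∀ lt ∈ (Seq c B j).filter (fun lt => ¬ (S' ⊆ lt.toFinset)),
          ((Aof c B lt).filter (fun v => S' ⊆ insert v lt.toFinset)).card
          ≤ (S'.filter (fun v => S'.erase v ⊆ lt.toFinset)).card := by
        intro lt hlt
        rw [Finset.mem_filter] at hlt
        apply Finset.card_le_card
        intro v hv
        rw [Finset.mem_filter] at hv ⊢
        have hvS : v ∈ S' := by
          by_contra hvS
          exact hlt.2 ((Finset.subset_insert_iff_of_notMem hvS).mp hv.2)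
        refine ⟨hvS, ?_⟩
        calc S'.erase v ⊆ (insert v lt.toFinset).erase v := Finset.erase_subset_erase v hv.2
          _ ⊆ lt.toFinset := Finset.erase_insert_subset _ _
      rw [← Finset.sum_filter_add_sum_filter_not (Seq c B j) (fun lt => S' ⊆ lt.toFinset)]
      have part1 : ∑ lt ∈ (Seq c B j).filter (fun lt => S' ⊆ lt.toFinset),
          ((Aof c B lt).filter (fun v => S' ⊆ insert v lt.toFinset)).card
          ≤ Nat.factorial S'.card * (2 ^ (2 * k - j) * Gfun k j S'.card) := by
        calc _ ≤ ∑ lt ∈ (Seq c B j).filter (fun lt => S' ⊆ lt.toFinset), 2 ^ (2*k-j) := by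
              apply Finset.sum_le_sum
              intro lt hlt
              rw [Finset.mem_filter] at hlt
              calc _ ≤ (Aof c B lt).card := Finset.card_filter_le _ _
                _ = 2 ^ (2*k-j) := Aof_card c B hB j (by omega) lt hlt.1
          _ = ((Seq c B j).filter (fun lt => S' ⊆ lt.toFinset)).card * 2 ^ (2*k-j) := by
              rw [Finset.sum_const, smul_eq_mul]
          _ ≤ (Nat.factorial S'.card * Gfun k j S'.card) * 2 ^ (2*k-j) :=
              Nat.mul_le_mul_right _ (ih (by omega) S')
          _ = Nat.factorial S'.card * (2 ^ (2 * k - j) * Gfun k j S'.card) := by ring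
      have part2 : ∑ lt ∈ (Seq c B j).filter (fun lt => ¬ (S' ⊆ lt.toFinset)),
          ((Aof c B lt).filter (fun v => S' ⊆ insert v lt.toFinset)).card
          ≤ Nat.factorial S'.card * Gfun k j r := by
        calc _ ≤ ∑ lt ∈ (Seq c B j).filter (fun lt => ¬ (S' ⊆ lt.toFinset)),
                (S'.filter (fun v => S'.erase v ⊆ lt.toFinset)).card :=
              Finset.sum_le_sum step1
          _ = ∑ lt ∈ (Seq c B j).filter (fun lt => ¬ (S' ⊆ lt.toFinset)),
                ∑ v ∈ S', (if S'.erase v ⊆ lt.toFinset then 1 else 0) := by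
              apply Finset.sum_congr rfl
              intro lt _
              rw [Finset.card_filter]
          _ = ∑ v ∈ S', ∑ lt ∈ (Seq c B j).filter (fun lt => ¬ (S' ⊆ lt.toFinset)),
                (if S'.erase v ⊆ lt.toFinset then 1 else 0) := Finset.sum_comm
          _ ≤ ∑ v ∈ S', ((Seq c B j).filter (fun lt => S'.erase v ⊆ lt.toFinset)).card := by
              apply Finset.sum_le_sum
              intro v _
              calc ∑ lt ∈ (Seq c B j).filter (fun lt => ¬ (S' ⊆ lt.toFinset)),
                    (if S'.erase v ⊆ lt.toFinset then 1 else 0)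
                  ≤ ∑ lt ∈ Seq c B j, (if S'.erase v ⊆ lt.toFinset then 1 else 0) :=
                    Finset.sum_le_sum_of_subset (Finset.filter_subset _ _)
                _ = _ := (Finset.card_filter _ _).symm
          _ ≤ ∑ v ∈ S', Nat.factorial r * Gfun k j r := by
              apply Finset.sum_le_sum
              intro v hv
              have hcard : (S'.erase v).card = r := by
                rw [Finset.card_erase_of_mem hv, hrr]
                omega
              have := ih (by omega) (S'.erase v)
              rwa [hcard] at this
          _ = S'.card * (Nat.factorial r * Gfun k j r) := by rw [Finset.sum_const, smul_eq_mul]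
          _ = Nat.factorial S'.card * Gfun k j r := by
              rw [hrr, Nat.factorial_succ]
              ring
      calc _ ≤ Nat.factorial S'.card * (2 ^ (2 * k - j) * Gfun k j S'.card) + Nat.factorial S'.card * Gfun k j r :=
            Nat.add_le_add part1 part2
        _ = Nat.factorial S'.card * (2 ^ (2*k-j) * Gfun k j S'.card + Gfun k j r) := by ring
        _ = Nat.factorial S'.card * Gfun k (j+1) S'.card := by rw [hrr, Gfun_succ]


noncomputable def Pprod (r : ℕ) : ℝ := ∏ j ∈ Finset.range r, (1 - ((2:ℝ))⁻¹ ^ (j+1))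

lemma Pprod_succ (r : ℕ) : Pprod (r+1) = Pprod r * (1 - ((2:ℝ))⁻¹ ^ (r+1)) :=
  Finset.prod_range_succ _ _

lemma Pprod_ge : ∀ r, 1/4 + ((2:ℝ)⁻¹) ^ (r+1) ≤ Pprod r := by
  intro r
  induction r with
  | zero => unfold Pprod; norm_num
  | succ r ih =>
    rw [Pprod_succ]
    rcases Nat.eq_zero_or_pos r with rfl | hr
    · unfold Pprod; norm_num
    · have hy : ((2:ℝ)⁻¹) ^ (r+1) ≤ 1/4 := by
        calc ((2:ℝ)⁻¹) ^ (r+1) ≤ ((2:ℝ)⁻¹) ^ 2 :=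
              pow_le_pow_of_le_one (by norm_num) (by norm_num) (by omega)
          _ = 1/4 := by norm_num
      have hy0 : (0:ℝ) ≤ ((2:ℝ)⁻¹) ^ (r+1) := by positivity
      have h2 : ((2:ℝ)⁻¹) ^ (r+1+1) = ((2:ℝ)⁻¹) ^ (r+1) * 2⁻¹ := pow_succ _ _
      nlinarith [ih]

noncomputable def gsum (r m : ℕ) : ℝ :=
  ∑ Q ∈ (Finset.range m).powersetCard r, (2:ℝ) ^ (∑ i ∈ Q, i)

lemma gsum_nonneg (r m : ℕ) : 0 ≤ gsum r m :=
  Finset.sum_nonneg (fun Q _ => by positivity)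

lemma gsum_zero (m : ℕ) : gsum 0 m = 1 := by
  simp [gsum]

noncomputable def mu (r m : ℕ) : ℕ := ∑ i ∈ Finset.Ico (m - r) m, i

lemma mu_zero (m : ℕ) : mu 0 m = 0 := by simp [mu]

lemma mu_succ (r m : ℕ) : mu (r+1) (m+1) = mu r m + m := by
  unfold mu
  have h1 : m + 1 - (r + 1) = m - r := by omega
  rw [h1, Finset.sum_Ico_succ_top (by omega)]

lemma mu_lower {r m : ℕ} (h : r + 1 ≤ m) : mu (r+1) m = (m - r - 1) + mu r m := by
  unfold mu
  have h1 : m - (r+1) < m := by omega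
  have h2 : m - (r+1) + 1 = m - r := by omega
  have h3 : m - (r+1) = m - r - 1 := by omega
  rw [Finset.sum_eq_sum_Ico_succ_bot h1, h2, h3]

lemma gsum_succ (r m : ℕ) :
    gsum (r+1) (m+1) = gsum (r+1) m + 2 ^ m * gsum r m := by
  have hm : m ∉ Finset.range m := by simp
  unfold gsum
  rw [Finset.range_add_one, Finset.powersetCard_succ_insert hm, Finset.sum_union]
  · congr 1
    rw [Finset.mul_sum, Finset.sum_image]
    · apply Finset.sum_congr rfl
      intro Q hQ
      have hQsub : Q ⊆ Finset.range m := (Finset.mem_powersetCard.mp hQ).1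
      have hmQ : m ∉ Q := fun h => hm (hQsub h)
      rw [Finset.sum_insert hmQ, pow_add]
    · intro Q hQ Q' hQ' heq
      have hQsub : Q ⊆ Finset.range m := (Finset.mem_powersetCard.mp hQ).1
      have hQ'sub : Q' ⊆ Finset.range m := (Finset.mem_powersetCard.mp hQ').1
      have e1 : (insert m Q).erase m = Q := Finset.erase_insert (fun h => hm (hQsub h))
      have e2 : (insert m Q').erase m = Q' := Finset.erase_insert (fun h => hm (hQ'sub h))
      rw [← e1, ← e2, heq]
  · rw [Finset.disjoint_left]
    intro Q hQ hQ2
    have hQsub : Q ⊆ Finset.range m := (Finset.mem_powersetCard.mp hQ).1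
    obtain ⟨Q', _, rfl⟩ := Finset.mem_image.mp hQ2
    exact hm (hQsub (Finset.mem_insert_self m Q'))

lemma gsum_bound : ∀ m r, Pprod r * gsum r m ≤ (2:ℝ) ^ (mu r m) := by
  intro m
  induction m with
  | zero =>
    intro r
    cases r with
    | zero => rw [gsum_zero, mu_zero]; unfold Pprod; norm_num
    | succ r =>
      have hg : gsum (r+1) 0 = 0 := by
        unfold gsum
        rw [Finset.powersetCard_eq_empty.mpr (by simp), Finset.sum_empty]
      rw [hg, mul_zero]
      positivity
  | succ m ih =>
    intro r
    cases r with
    | zero => rw [gsum_zero, mu_zero]; simp [Pprod]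
    | succ r =>
      rw [gsum_succ, mul_add]
      have hPy : Pprod (r+1) = Pprod r * (1 - ((2:ℝ)⁻¹) ^ (r+1)) := Pprod_succ r
      have hy0 : (0:ℝ) ≤ ((2:ℝ)⁻¹) ^ (r+1) := by positivity
      have hy1 : ((2:ℝ)⁻¹) ^ (r+1) ≤ 1 := by
        apply pow_le_one₀ <;> norm_num
      have h1 : Pprod (r+1) * gsum (r+1) m ≤ (2:ℝ) ^ (mu (r+1) m) := ih (r+1)
      have hmu1 : mu (r+1) (m+1) = mu r m + m := mu_succ r m
      have h2 : Pprod (r+1) * (2 ^ m * gsum r m)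
          ≤ (1 - ((2:ℝ)⁻¹) ^ (r+1)) * ((2:ℝ) ^ m * (2:ℝ) ^ (mu r m)) := by
        rw [hPy]
        have hihr := ih r
        have h2m : (0:ℝ) ≤ 2 ^ m := by positivity
        have hfac : (0:ℝ) ≤ (1 - ((2:ℝ)⁻¹) ^ (r+1)) * 2 ^ m :=
          mul_nonneg (by linarith) h2m
        calc Pprod r * (1 - ((2:ℝ)⁻¹) ^ (r+1)) * (2 ^ m * gsum r m)
            = ((1 - ((2:ℝ)⁻¹) ^ (r+1)) * 2 ^ m) * (Pprod r * gsum r m) := by ring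
          _ ≤ ((1 - ((2:ℝ)⁻¹) ^ (r+1)) * 2 ^ m) * (2:ℝ) ^ (mu r m) :=
              mul_le_mul_of_nonneg_left hihr hfac
          _ = (1 - ((2:ℝ)⁻¹) ^ (r+1)) * ((2:ℝ) ^ m * (2:ℝ) ^ (mu r m)) := by ring
      rcases le_or_gt (r+1) m with hrm | hrm
      · have hmu2 : mu (r+1) m + (r+1) = mu r m + m := by
          rw [mu_lower hrm]; omega
        have e1 : (2:ℝ) ^ (mu (r+1) m) * 2 ^ (r+1) = 2 ^ (mu r m + m) := by
          rw [← pow_add, hmu2]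
        have e2 : (2:ℝ) ^ m * 2 ^ (mu r m) = 2 ^ (mu r m + m) := by
          rw [← pow_add]; ring_nf
        have e3 : ((2:ℝ)⁻¹) ^ (r+1) * 2 ^ (r+1) = 1 := by
          rw [← mul_pow]; norm_num
        have hp : (0:ℝ) < 2 ^ (r+1) := by positivity
        rw [hmu1]
        have hP : (2:ℝ) ^ (mu (r+1) m) = ((2:ℝ)⁻¹) ^ (r+1) * 2 ^ (mu r m + m) := by
          rw [inv_pow, ← e1]
          field_simp
        rw [hP] at h1
        have hA : (1 - ((2:ℝ)⁻¹) ^ (r+1)) * ((2:ℝ) ^ m * (2:ℝ) ^ (mu r m))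
            = 2 ^ (mu r m + m) - ((2:ℝ)⁻¹) ^ (r+1) * 2 ^ (mu r m + m) := by
          rw [← e2]; ring
        rw [hA] at h2
        linarith
      · have hg0 : gsum (r+1) m = 0 := by
          unfold gsum
          rw [Finset.powersetCard_eq_empty.mpr (by simp; omega), Finset.sum_empty]
        rw [hg0, mul_zero, hmu1]
        have e2 : (2:ℝ) ^ m * 2 ^ (mu r m) = 2 ^ (mu r m + m) := by
          rw [← pow_add]; ring_nf
        have hA : (1 - ((2:ℝ)⁻¹) ^ (r+1)) * ((2:ℝ) ^ m * (2:ℝ) ^ (mu r m))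
            = 2 ^ (mu r m + m) - ((2:ℝ)⁻¹) ^ (r+1) * 2 ^ (mu r m + m) := by
          rw [← e2]; ring
        rw [hA] at h2
        have hy2 : (0:ℝ) ≤ ((2:ℝ)⁻¹) ^ (r+1) * 2 ^ (mu r m + m) := by positivity
        linarith

lemma gsum_le (r m : ℕ) : gsum r m ≤ 4 * (2:ℝ) ^ (mu r m) := by
  have h1 := gsum_bound m r
  have h2 := Pprod_ge r
  have h3 := gsum_nonneg r m
  have hy0 : (0:ℝ) ≤ ((2:ℝ)⁻¹) ^ (r+1) := by positivity
  nlinarith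


lemma phi_props {l : List (Fin n)} (hk : 2 ≤ k) (hsym : ∀ i j, c i j = c j i)
    (hl : l ∈ Seq c B (2*k-2)) :
    (Phi c B k l).card = k ∧ (∃ b, ∀ i ∈ Phi c B k l, ∀ j ∈ Phi c B k l, i ≠ j → c i j = b)
      ∧ Phi c B k l ⊆ B ∧ Phi c B k l ⊆ l.toFinset := by
  have h1 : 2*k-2 = (2*k-3)+1 := by omega
  rw [h1] at hl
  obtain ⟨lt, hlt, v₀, hv₀, rfl⟩ := (mem_seq_succ c B).mp hl
  have hlen : lt.length = 2*k-3 := seq_length c B _ lt hlt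
  have hl' : (v₀ :: lt) ∈ Seq c B ((2*k-3)+1) := hl
  refine ⟨phi_card c B k hl' hlen hk, ⟨selColor c B k lt, phi_mono c B k hl' hsym⟩, ?_, ?_⟩
  · refine (phi_subset_entries c B k).trans ?_
    intro x hx
    rw [List.mem_toFinset] at hx
    exact seq_mem_B c B hl' x hx
  · exact phi_subset_entries c B k

lemma block_count (hk : 2 ≤ k) (hsym : ∀ i j, c i j = c j i) (hB : B.card = 2 ^ (2*k)) :
    (∏ i ∈ Finset.range (2*k-2), 2^(2*k-i))
      ≤ (((Finset.univ.filter (fun S : Finset (Fin n) =>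
            S.card = k ∧ ∃ b, ∀ i ∈ S, ∀ j ∈ S, i ≠ j → c i j = b)).filter
          (fun S => S ⊆ B)).card) * (Nat.factorial k * Gfun k (2*k-2) k) := by
  set t := 2*k-2 with ht
  have htk : t ≤ 2*k := by omega
  have hL : (Seq c B t).card = ∏ i ∈ Finset.range t, 2^(2*k-i) := seq_card c B hB t htk
  rw [← hL]
  rw [Finset.card_eq_sum_card_image (Phi c B k) (Seq c B t)]
  have hbound : ∀ S ∈ (Seq c B t).image (Phi c B k),
      ((Seq c B t).filter (fun l => Phi c B k l = S)).card ≤ Nat.factorial k * Gfun k (2*k-2) k := by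
    intro S hS
    obtain ⟨l₀, hl₀, rfl⟩ := Finset.mem_image.mp hS
    have hprops := phi_props c B k hk hsym hl₀
    calc ((Seq c B t).filter (fun l => Phi c B k l = Phi c B k l₀)).card
        ≤ ((Seq c B t).filter (fun l => Phi c B k l₀ ⊆ l.toFinset)).card := by
          apply Finset.card_le_card
          intro l hl
          rw [Finset.mem_filter] at hl ⊢
          refine ⟨hl.1, ?_⟩
          rw [← hl.2]
          exact (phi_props c B k hk hsym hl.1).2.2.2
      _ ≤ Nat.factorial (Phi c B k l₀).card * Gfun k t (Phi c B k l₀).card :=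
          count_forced c B k hB t htk _
      _ = Nat.factorial k * Gfun k (2*k-2) k := by rw [hprops.1]
  calc ∑ S ∈ (Seq c B t).image (Phi c B k), ((Seq c B t).filter (fun l => Phi c B k l = S)).card
      ≤ ∑ _S ∈ (Seq c B t).image (Phi c B k), Nat.factorial k * Gfun k (2*k-2) k :=
        Finset.sum_le_sum hbound
    _ = ((Seq c B t).image (Phi c B k)).card * (Nat.factorial k * Gfun k (2*k-2) k) := by
        rw [Finset.sum_const, smul_eq_mul]
    _ ≤ _ := by
        apply Nat.mul_le_mul_right
        apply Finset.card_le_card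
        intro S hS
        obtain ⟨l₀, hl₀, rfl⟩ := Finset.mem_image.mp hS
        have hprops := phi_props c B k hk hsym hl₀
        rw [Finset.mem_filter, Finset.mem_filter]
        exact ⟨⟨Finset.mem_univ _, hprops.1, hprops.2.1⟩, hprops.2.2.1⟩


lemma Gfun_real_le {t : ℕ} (ht : t ≤ 2*k) :
    ((Gfun k t k : ℕ) : ℝ) * 2^(2*k*k)
      ≤ (∏ i ∈ Finset.range t, (2:ℝ)^(2*k-i)) * (4 * 2^(mu k t)) := by
  have hcast : ((Gfun k t k : ℕ) : ℝ)
      = ∑ Q ∈ (Finset.range t).powersetCard k, ∏ i ∈ Finset.range t \ Q, (2:ℝ)^(2*k-i) := by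
    unfold Gfun
    push_cast
    rfl
  rw [hcast, Finset.sum_mul]
  have hterm : ∀ Q ∈ (Finset.range t).powersetCard k,
      (∏ i ∈ Finset.range t \ Q, (2:ℝ)^(2*k-i)) * 2^(2*k*k)
        = (∏ i ∈ Finset.range t, (2:ℝ)^(2*k-i)) * (2:ℝ)^(∑ i ∈ Q, i) := by
    intro Q hQ
    obtain ⟨hQsub, hQcard⟩ := Finset.mem_powersetCard.mp hQ
    have hsplit : (∏ i ∈ Q, (2:ℝ)^(2*k-i)) * (2:ℝ)^(∑ i ∈ Q, i) = (2:ℝ)^(2*k*k) := by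
      rw [← Finset.prod_pow_eq_pow_sum, ← Finset.prod_mul_distrib]
      have : ∀ i ∈ Q, (2:ℝ)^(2*k-i) * (2:ℝ)^i = (2:ℝ)^(2*k) := by
        intro i hi
        have hik : i ≤ 2*k := by
          have := Finset.mem_range.mp (hQsub hi)
          omega
        rw [← pow_add]
        congr 1
        omega
      rw [Finset.prod_congr rfl this, Finset.prod_const, hQcard, ← pow_mul]
    have hfull : (∏ i ∈ Finset.range t \ Q, (2:ℝ)^(2*k-i)) * (∏ i ∈ Q, (2:ℝ)^(2*k-i))
        = ∏ i ∈ Finset.range t, (2:ℝ)^(2*k-i) := Finset.prod_sdiff hQsub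
    calc (∏ i ∈ Finset.range t \ Q, (2:ℝ)^(2*k-i)) * 2^(2*k*k)
        = (∏ i ∈ Finset.range t \ Q, (2:ℝ)^(2*k-i))
            * ((∏ i ∈ Q, (2:ℝ)^(2*k-i)) * (2:ℝ)^(∑ i ∈ Q, i)) := by rw [hsplit]
      _ = ((∏ i ∈ Finset.range t \ Q, (2:ℝ)^(2*k-i)) * (∏ i ∈ Q, (2:ℝ)^(2*k-i)))
            * (2:ℝ)^(∑ i ∈ Q, i) := by ring
      _ = _ := by rw [hfull]
  rw [Finset.sum_congr rfl hterm, ← Finset.mul_sum]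
  have hgs : ∑ Q ∈ (Finset.range t).powersetCard k, (2:ℝ)^(∑ i ∈ Q, i) = gsum k t := rfl
  rw [hgs]
  have hLpos : (0:ℝ) ≤ ∏ i ∈ Finset.range t, (2:ℝ)^(2*k-i) := by positivity
  exact mul_le_mul_of_nonneg_left (gsum_le k t) hLpos

lemma mu_val (hk : 2 ≤ k) : 2 * mu k (2*k-2) + 5*k = 3*k^2 := by
  obtain ⟨m, rfl⟩ : ∃ m, k = m + 2 := ⟨k - 2, by omega⟩
  unfold mu
  have h1 : 2*(m+2)-2 - (m+2) = m := by omega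
  rw [h1, Finset.sum_Ico_eq_sum_range]
  have h2 : 2*(m+2)-2 - m = m + 2 := by omega
  rw [h2]
  have h3 : ∑ i ∈ Finset.range (m+2), (m + i) = (m+2)*m + ∑ i ∈ Finset.range (m+2), i := by
    rw [Finset.sum_add_distrib, Finset.sum_const, Finset.card_range, smul_eq_mul]
  rw [h3]
  have h4 := Finset.sum_range_id_mul_two (m+2)
  have h5 : (m+2) * (m+2-1) = (m+2)*(m+1) := by congr 1
  rw [h5] at h4
  nlinarith [h4]

lemma Ekey (hk : 2 ≤ k) :
    (2:ℝ) ^ ((-3*(k:ℝ)^2 + 5*(k:ℝ) - 4)/2) * (4 * (2:ℝ)^(mu k (2*k-2))) = 1 := by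
  have hmu : ((mu k (2*k-2) : ℕ) : ℝ) = (3*(k:ℝ)^2 - 5*k)/2 := by
    have := mu_val k hk
    have hcast : 2 * ((mu k (2*k-2) : ℕ) : ℝ) + 5*(k:ℝ) = 3*(k:ℝ)^2 := by
      exact_mod_cast congrArg (Nat.cast : ℕ → ℝ) this
    linarith
  have hx : (4 * (2:ℝ)^(mu k (2*k-2))) = (2:ℝ) ^ ((2:ℝ) + ((mu k (2*k-2) : ℕ) : ℝ)) := by
    rw [Real.rpow_add (by norm_num : (0:ℝ) < 2), Real.rpow_natCast]
    congr 1
    rw [show (2:ℝ) = ((2:ℕ):ℝ) by norm_num, Real.rpow_natCast]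
    norm_num
  rw [hx, ← Real.rpow_add (by norm_num : (0:ℝ) < 2)]
  rw [show ((-3*(k:ℝ)^2 + 5*(k:ℝ) - 4)/2 + ((2:ℝ) + ((mu k (2*k-2) : ℕ) : ℝ))) = 0 from by
    rw [hmu]; ring]
  exact Real.rpow_zero 2

lemma block_real (hk : 2 ≤ k) (hsym : ∀ i j, c i j = c j i) (hB : B.card = 2 ^ (2*k)) :
    (2:ℝ) ^ ((-3*(k:ℝ)^2 + 5*(k:ℝ) - 4)/2) * (((2^(2*k)).choose k : ℕ) : ℝ)
      ≤ (((Finset.univ.filter (fun S : Finset (Fin n) =>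
            S.card = k ∧ ∃ b, ∀ i ∈ S, ∀ j ∈ S, i ≠ j → c i j = b)).filter
          (fun S => S ⊆ B)).card : ℝ) := by
  have htk : 2*k-2 ≤ 2*k := by omega
  set MB := (((Finset.univ.filter (fun S : Finset (Fin n) =>
      S.card = k ∧ ∃ b, ∀ i ∈ S, ∀ j ∈ S, i ≠ j → c i j = b)).filter
      (fun S => S ⊆ B)).card : ℝ) with hMB
  have hMB0 : 0 ≤ MB := by positivity
  set Lr : ℝ := ∏ i ∈ Finset.range (2*k-2), (2:ℝ)^(2*k-i) with hLr
  have hLpos : (0:ℝ) < Lr := by positivity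
  have hcount := block_count c B k hk hsym hB
  have hcountR : Lr ≤ MB * ((Nat.factorial k : ℝ) * ((Gfun k (2*k-2) k : ℕ) : ℝ)) := by
    have hcast : ((∏ i ∈ Finset.range (2*k-2), 2^(2*k-i) : ℕ) : ℝ) = Lr := by
      push_cast
      rfl
    calc Lr = ((∏ i ∈ Finset.range (2*k-2), 2^(2*k-i) : ℕ) : ℝ) := hcast.symm
      _ ≤ _ := by rw [hMB]; exact_mod_cast hcount
  have hpow2 : (0:ℝ) < 2^(2*k*k) := by positivity
  have hGle : ((Gfun k (2*k-2) k : ℕ) : ℝ) ≤ Lr * (4 * 2^(mu k (2*k-2))) / 2^(2*k*k) := by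
    rw [le_div_iff₀ hpow2]
    exact Gfun_real_le k htk
  set E := (2:ℝ) ^ ((-3*(k:ℝ)^2 + 5*(k:ℝ) - 4)/2) with hE
  have hEpos : 0 < E := Real.rpow_pos_of_pos (by norm_num) _
  set D := (Nat.factorial k : ℝ) * (Lr * (4 * 2^(mu k (2*k-2))) / 2^(2*k*k)) with hD
  have hD0 : 0 < D := by
    rw [hD]
    have : (0:ℝ) < (Nat.factorial k : ℝ) := by exact_mod_cast Nat.factorial_pos k
    positivity
  have hLD : Lr ≤ MB * D := by
    calc Lr ≤ MB * ((Nat.factorial k : ℝ) * ((Gfun k (2*k-2) k : ℕ) : ℝ)) := hcountR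
      _ ≤ MB * D := by
        apply mul_le_mul_of_nonneg_left _ hMB0
        rw [hD]
        apply mul_le_mul_of_nonneg_left hGle (by positivity)
  have hRD : E * (((2^(2*k)).choose k : ℕ) : ℝ) * D ≤ Lr := by
    have hNk : ((Nat.factorial k : ℕ) : ℝ) * (((2^(2*k)).choose k : ℕ) : ℝ) ≤ (2:ℝ)^(2*k*k) := by
      have h1 : Nat.factorial k * (2^(2*k)).choose k ≤ (2^(2*k))^k := by
        rw [← Nat.descFactorial_eq_factorial_mul_choose]
        exact Nat.descFactorial_le_pow _ _
      calc ((Nat.factorial k : ℕ) : ℝ) * (((2^(2*k)).choose k : ℕ) : ℝ)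
          = ((Nat.factorial k * (2^(2*k)).choose k : ℕ) : ℝ) := by push_cast; ring
        _ ≤ (((2^(2*k))^k : ℕ) : ℝ) := by exact_mod_cast h1
        _ = (2:ℝ)^(2*k*k) := by push_cast; rw [← pow_mul]
    have hkey := Ekey k hk
    rw [hD]
    rw [div_eq_mul_inv]
    have expand : E * (((2^(2*k)).choose k : ℕ) : ℝ)
        * ((Nat.factorial k : ℝ) * (Lr * (4 * 2^(mu k (2*k-2))) * ((2:ℝ)^(2*k*k))⁻¹))
        = Lr * ((E * (4 * 2^(mu k (2*k-2)))) * (((Nat.factorial k : ℝ)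
            * (((2^(2*k)).choose k : ℕ) : ℝ)) * ((2:ℝ)^(2*k*k))⁻¹)) := by
      ring
    rw [expand, hkey, one_mul]
    have hfrac : ((Nat.factorial k : ℝ) * (((2^(2*k)).choose k : ℕ) : ℝ)) * ((2:ℝ)^(2*k*k))⁻¹ ≤ 1 := by
      have h := mul_le_mul_of_nonneg_right hNk (inv_nonneg.mpr hpow2.le)
      rwa [mul_inv_cancel₀ (ne_of_gt hpow2)] at h
    nlinarith [hLpos]
  have h1 : E * (((2^(2*k)).choose k : ℕ) : ℝ) * D ≤ MB * D := le_trans hRD hLD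
  exact le_of_mul_le_mul_right h1 hD0


lemma count_supersets (hkN : k ≤ 2^(2*k)) (hNn : 2^(2*k) ≤ n) (S : Finset (Fin n)) (hS : S.card = k) :
    ((Finset.powersetCard (2^(2*k)) (Finset.univ : Finset (Fin n))).filter
      (fun B => S ⊆ B)).card = (n - k).choose (2^(2*k) - k) := by
  have hc : ((Finset.univ : Finset (Fin n)) \ S).card = n - k := by
    rw [Finset.card_sdiff_of_subset (Finset.subset_univ S), Finset.card_univ, Fintype.card_fin, hS]
  rw [← hc, ← Finset.card_powersetCard]
  apply Finset.card_bij' (fun B _ => B \ S) (fun D _ => D ∪ S)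
  · intro B hB
    rw [Finset.mem_filter, Finset.mem_powersetCard] at hB
    rw [Finset.mem_powersetCard]
    constructor
    · exact Finset.sdiff_subset_sdiff (Finset.subset_univ B) (Finset.Subset.refl S)
    · rw [Finset.card_sdiff_of_subset hB.2, hB.1.2, hS]
  · intro D hD
    rw [Finset.mem_powersetCard] at hD
    have hdisj : Disjoint D S := by
      rw [Finset.disjoint_left]
      intro a haD haS
      have := hD.1 haD
      rw [Finset.mem_sdiff] at this
      exact this.2 haS
    rw [Finset.mem_filter, Finset.mem_powersetCard]
    refine ⟨⟨Finset.subset_univ _, ?_⟩, Finset.subset_union_right⟩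
    rw [Finset.card_union_of_disjoint hdisj, hD.2, hS]
    omega
  · intro B hB
    rw [Finset.mem_filter] at hB
    exact Finset.sdiff_union_of_subset hB.2
  · intro D hD
    rw [Finset.mem_powersetCard] at hD
    have hdisj : Disjoint D S := by
      rw [Finset.disjoint_left]
      intro a haD haS
      have := hD.1 haD
      rw [Finset.mem_sdiff] at this
      exact this.2 haS
    rw [Finset.union_sdiff_distrib, Finset.sdiff_self, Finset.union_empty,
      Finset.sdiff_eq_self_of_disjoint hdisj]

end Stmt11

theorem stmt_11 (n k : ℕ) (hk2 : 2 ≤ k) (hk : (k : ℝ) ≤ Real.logb 2 n / 2)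
    (c : Fin n → Fin n → Bool) (hsym : ∀ i j, c i j = c j i) :
    ((Finset.univ.filter (fun S : Finset (Fin n) =>
        S.card = k ∧ ∃ b, ∀ i ∈ S, ∀ j ∈ S, i ≠ j → c i j = b)).card : ℝ)
      ≥ (2 : ℝ) ^ ((-3 * (k : ℝ) ^ 2 + 5 * k - 4) / 2) * (n.choose k : ℕ) := by
  classical
  have hn0 : n ≠ 0 := by
    rintro rfl
    rw [Nat.cast_zero, Real.logb_zero] at hk
    have hk2' : (2:ℝ) ≤ (k:ℝ) := by exact_mod_cast hk2
    linarith
  have hN : 2^(2*k) ≤ n := by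
    have hnpos : (0:ℝ) < (n:ℝ) := by
      have := Nat.pos_of_ne_zero hn0
      exact_mod_cast this
    have h1 : ((2*k : ℕ) : ℝ) ≤ Real.logb 2 n := by push_cast; linarith
    have h2 : (2:ℝ) ^ (((2*k : ℕ)) : ℝ) ≤ (2:ℝ) ^ Real.logb 2 (n:ℝ) :=
      Real.rpow_le_rpow_of_exponent_le (by norm_num) h1
    rw [Real.rpow_logb (by norm_num) (by norm_num) hnpos, Real.rpow_natCast] at h2
    exact_mod_cast h2
  set N := 2^(2*k) with hNdef
  have hkN : k ≤ N :=
    le_of_lt (lt_of_lt_of_le (Nat.lt_two_pow_self (n := k)) (Nat.pow_le_pow_right (by norm_num) (by omega)))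
  have hkn : k ≤ n := hkN.trans hN
  rw [ge_iff_le]
  set M := Finset.univ.filter (fun S : Finset (Fin n) =>
      S.card = k ∧ ∃ b, ∀ i ∈ S, ∀ j ∈ S, i ≠ j → c i j = b) with hM
  set E := (2 : ℝ) ^ ((-3 * (k : ℝ) ^ 2 + 5 * k - 4) / 2) with hE
  -- swap sum
  have swap : ∑ B ∈ Finset.powersetCard N (Finset.univ : Finset (Fin n)),
      (M.filter (fun S => S ⊆ B)).card
      = ∑ S ∈ M, ((Finset.powersetCard N (Finset.univ : Finset (Fin n))).filter
          (fun B => S ⊆ B)).card := by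
    have h1 : ∀ B, (M.filter (fun S => S ⊆ B)).card
        = ∑ S ∈ M, (if S ⊆ B then 1 else 0) := by
      intro B
      rw [Finset.card_filter]
    have h2 : ∀ S, ((Finset.powersetCard N (Finset.univ : Finset (Fin n))).filter
        (fun B => S ⊆ B)).card
        = ∑ B ∈ Finset.powersetCard N (Finset.univ : Finset (Fin n)), (if S ⊆ B then 1 else 0) := by
      intro S
      rw [Finset.card_filter]
    simp_rw [h1, h2]
    exact Finset.sum_comm
  have hsup : ∀ S ∈ M, ((Finset.powersetCard N (Finset.univ : Finset (Fin n))).filter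
      (fun B => S ⊆ B)).card = (n - k).choose (N - k) := by
    intro S hS
    rw [hM, Finset.mem_filter] at hS
    exact Stmt11.count_supersets k hkN hN S hS.2.1
  have hblock : ∀ B ∈ Finset.powersetCard N (Finset.univ : Finset (Fin n)),
      E * ((N.choose k : ℕ) : ℝ) ≤ ((M.filter (fun S => S ⊆ B)).card : ℝ) := by
    intro B hB
    have hBcard : B.card = 2^(2*k) := (Finset.mem_powersetCard.mp hB).2
    exact Stmt11.block_real c B k hk2 hsym hBcard
  have main : ((Finset.powersetCard N (Finset.univ : Finset (Fin n))).card : ℝ)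
      * (E * ((N.choose k : ℕ) : ℝ))
      ≤ (M.card : ℝ) * (((n - k).choose (N - k) : ℕ) : ℝ) := by
    have h1 := Finset.card_nsmul_le_sum (Finset.powersetCard N (Finset.univ : Finset (Fin n)))
      (fun B => ((M.filter (fun S => S ⊆ B)).card : ℝ)) (E * ((N.choose k : ℕ) : ℝ)) hblock
    rw [nsmul_eq_mul] at h1
    have h2 : ∑ B ∈ Finset.powersetCard N (Finset.univ : Finset (Fin n)),
        ((M.filter (fun S => S ⊆ B)).card : ℝ)
        = (M.card : ℝ) * (((n - k).choose (N - k) : ℕ) : ℝ) := by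
      rw [← Nat.cast_sum, swap, Finset.sum_congr rfl hsup, Finset.sum_const, smul_eq_mul]
      push_cast
      ring
    rw [h2] at h1
    exact h1
  rw [Finset.card_powersetCard, Finset.card_univ, Fintype.card_fin] at main
  have hid : (n.choose N) * (N.choose k) = (n.choose k) * ((n - k).choose (N - k)) :=
    Nat.choose_mul hkN
  have hpos : (0:ℝ) < (((n - k).choose (N - k) : ℕ) : ℝ) := by
    have : 0 < (n - k).choose (N - k) := Nat.choose_pos (by omega)
    exact_mod_cast this
  have final : E * ((n.choose k : ℕ) : ℝ) * (((n - k).choose (N - k) : ℕ) : ℝ)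
      ≤ (M.card : ℝ) * (((n - k).choose (N - k) : ℕ) : ℝ) := by
    calc E * ((n.choose k : ℕ) : ℝ) * (((n - k).choose (N - k) : ℕ) : ℝ)
        = E * (((n.choose k) * ((n - k).choose (N - k)) : ℕ) : ℝ) := by push_cast; ring
      _ = E * (((n.choose N) * (N.choose k) : ℕ) : ℝ) := by rw [hid]
      _ = ((n.choose N : ℕ) : ℝ) * (E * ((N.choose k : ℕ) : ℝ)) := by push_cast; ring
      _ ≤ _ := main
  exact le_of_mul_le_mul_right final hpos
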